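/- Let k ≥ 1, r₀ > 0, and let w : [r₀,∞) → ℂ be continuous with ∫_{r₀}^∞ s^{|k|+1}|w(s)| ds < ∞ and ∫_{r₀}^∞ s^{-|k|+1}|w(s)| ds < ∞. Define v_r(r) = (i r^{-k-1}/2) ∫_{r₀}^r s^{k+1} w(s) ds + (i r^{k-1}/2) ∫_r^∞ s^{-k+1} w(s) ds and v_φ(r) = (r^{-k-1}/2) ∫_{r₀}^r s^{k+1} w(s) ds − (r^{k-1}/2) ∫_r^∞ s^{-k+1} w(s) ds. Then (1/r)(r v_r(r))' + (ik/r) v_φ(r) = 0 and (1/r)(r v_φ(r))' − (ik/r) v_r(r) = w(r) for all r > r₀. -/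
import Mathlib


open MeasureTheory Set

theorem biot_savart_fourier_mode_solves_system
    (k : ℤ) (hk : 1 ≤ k) (r₀ : ℝ) (hr₀ : 0 < r₀) (w : ℝ → ℂ)
    (hw : ContinuousOn w (Ici r₀))
    (h1 : IntegrableOn (fun s : ℝ => s ^ (k + 1) * ‖w s‖) (Ioi r₀))
    (h2 : IntegrableOn (fun s : ℝ => s ^ (-k + 1) * ‖w s‖) (Ioi r₀))
    (vr vφ : ℝ → ℂ)
    (hvr : ∀ r : ℝ, vr r
      = (Complex.I * (r : ℂ) ^ (-k - 1) / 2) * (∫ s in Ioo r₀ r, (s : ℂ) ^ (k + 1) * w s)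
        + (Complex.I * (r : ℂ) ^ (k - 1) / 2) * (∫ s in Ioi r, (s : ℂ) ^ (-k + 1) * w s))
    (hvφ : ∀ r : ℝ, vφ r
      = ((r : ℂ) ^ (-k - 1) / 2) * (∫ s in Ioo r₀ r, (s : ℂ) ^ (k + 1) * w s)
        - ((r : ℂ) ^ (k - 1) / 2) * (∫ s in Ioi r, (s : ℂ) ^ (-k + 1) * w s)) :
    ∀ r : ℝ, r₀ < r →
      (1 / (r : ℂ)) * deriv (fun ρ : ℝ => (ρ : ℂ) * vr ρ) r
          + (Complex.I * (k : ℂ) / (r : ℂ)) * vφ r = 0 ∧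
      (1 / (r : ℂ)) * deriv (fun ρ : ℝ => (ρ : ℂ) * vφ ρ) r
          - (Complex.I * (k : ℂ) / (r : ℂ)) * vr r = w r := by
  intro r hr
  have hr0R : (0 : ℝ) < r := hr₀.trans hr
  have hrne : (r : ℂ) ≠ 0 := by exact_mod_cast hr0R.ne'
  set f : ℝ → ℂ := fun s => (s : ℂ) ^ (k + 1) * w s with hfdef
  set g : ℝ → ℂ := fun s => (s : ℂ) ^ (-k + 1) * w s with hgdef
  set A : ℝ → ℂ := fun ρ => ∫ s in Ioo r₀ ρ, f s with hAdef
  set B : ℝ → ℂ := fun ρ => ∫ s in Ioi ρ, g s with hBdef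
  -- continuity facts
  have hcpow : ∀ n : ℤ, ContinuousOn (fun s : ℝ => (s : ℂ) ^ n) (Ici r₀) := by
    intro n
    refine ContinuousOn.zpow₀ Complex.continuous_ofReal.continuousOn n ?_
    intro x hx
    left
    exact_mod_cast (hr₀.trans_le hx).ne'
  have hfc : ContinuousOn f (Ici r₀) := (hcpow (k + 1)).mul hw
  have hgc : ContinuousOn g (Ici r₀) := (hcpow (-k + 1)).mul hw
  -- integrability of g on Ioi r₀
  have hgi : IntegrableOn g (Ioi r₀) := by
    refine Integrable.mono' h2
      ((hgc.mono Ioi_subset_Ici_self).aestronglyMeasurable measurableSet_Ioi) ?_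
    filter_upwards [ae_restrict_mem measurableSet_Ioi] with s hs
    have hs0 : (0 : ℝ) < s := hr₀.trans hs
    have : ‖(s : ℂ) ^ (-k + 1)‖ = s ^ (-k + 1) := by
      rw [norm_zpow, Complex.norm_real, Real.norm_of_nonneg hs0.le]
    simp only [hgdef, norm_mul, this, le_refl]
  -- zpow arithmetic helper
  have hzz : ∀ ρ : ℝ, r₀ < ρ → ∀ n : ℤ, (ρ : ℂ) * (ρ : ℂ) ^ (n - 1) = (ρ : ℂ) ^ n := by
    intro ρ hρ n
    have hne : (ρ : ℂ) ≠ 0 := by exact_mod_cast (hr₀.trans hρ).ne'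
    calc (ρ : ℂ) * (ρ : ℂ) ^ (n - 1) = (ρ : ℂ) ^ (1 : ℤ) * (ρ : ℂ) ^ (n - 1) := by
          rw [zpow_one]
      _ = (ρ : ℂ) ^ (1 + (n - 1)) := (zpow_add₀ hne 1 (n - 1)).symm
      _ = (ρ : ℂ) ^ n := by rw [show 1 + (n - 1) = n by omega]
  -- derivative of A
  have hfint : IntervalIntegrable f volume r₀ r := by
    apply ContinuousOn.intervalIntegrable
    refine hfc.mono ?_
    rw [uIcc_of_le hr.le]
    exact Icc_subset_Ici_self
  have hAeq : ∀ ρ ∈ Ioi r₀, A ρ = ∫ s in r₀..ρ, f s := by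
    intro ρ hρ
    rw [intervalIntegral.integral_of_le (le_of_lt hρ),
      MeasureTheory.integral_Ioc_eq_integral_Ioo]
  have hAd : HasDerivAt A (f r) r := by
    have hd : HasDerivAt (fun ρ => ∫ s in r₀..ρ, f s) (f r) r :=
      intervalIntegral.integral_hasDerivAt_right hfint
        ⟨Ioi r₀, Ioi_mem_nhds hr,
          (hfc.mono Ioi_subset_Ici_self).aestronglyMeasurable measurableSet_Ioi⟩
        (hfc.continuousAt (Ici_mem_nhds hr))
    refine hd.congr_of_eventuallyEq ?_
    filter_upwards [Ioi_mem_nhds hr] with ρ hρ using hAeq ρ hρ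
  -- derivative of B
  have hgint : IntervalIntegrable g volume r₀ r := by
    apply ContinuousOn.intervalIntegrable
    refine hgc.mono ?_
    rw [uIcc_of_le hr.le]
    exact Icc_subset_Ici_self
  have hBeq : ∀ ρ ∈ Ioi r₀, B ρ = (∫ s in Ioi r₀, g s) - ∫ s in r₀..ρ, g s := by
    intro ρ hρ
    have hsplit : (∫ s in Ioi r₀, g s)
        = (∫ s in Ioc r₀ ρ, g s) + ∫ s in Ioi ρ, g s := by
      rw [← MeasureTheory.setIntegral_union (Ioc_disjoint_Ioi le_rfl) measurableSet_Ioi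
        (hgi.mono_set Ioc_subset_Ioi_self) (hgi.mono_set (Ioi_subset_Ioi (le_of_lt hρ))),
        Ioc_union_Ioi_eq_Ioi (le_of_lt hρ)]
    rw [intervalIntegral.integral_of_le (le_of_lt hρ), hsplit]
    simp only [hBdef]
    ring
  have hBd : HasDerivAt B (-(g r)) r := by
    have hd : HasDerivAt (fun ρ => (∫ s in Ioi r₀, g s) - ∫ s in r₀..ρ, g s) (-(g r)) r := by
      refine HasDerivAt.const_sub _ ?_
      exact intervalIntegral.integral_hasDerivAt_right hgint
        ⟨Ioi r₀, Ioi_mem_nhds hr,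
          (hgc.mono Ioi_subset_Ici_self).aestronglyMeasurable measurableSet_Ioi⟩
        (hgc.continuousAt (Ici_mem_nhds hr))
    refine hd.congr_of_eventuallyEq ?_
    filter_upwards [Ioi_mem_nhds hr] with ρ hρ using hBeq ρ hρ
  -- derivatives of power functions
  have hpn : HasDerivAt (fun ρ : ℝ => (ρ : ℂ) ^ (-k)) (-(k : ℂ) * (r : ℂ) ^ (-k - 1)) r := by
    have := (hasDerivAt_zpow (-k) (r : ℂ) (Or.inl hrne)).comp_ofReal
    simpa using this
  have hpk : HasDerivAt (fun ρ : ℝ => (ρ : ℂ) ^ k) ((k : ℂ) * (r : ℂ) ^ (k - 1)) r := by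
    have := (hasDerivAt_zpow k (r : ℂ) (Or.inl hrne)).comp_ofReal
    simpa using this
  -- derivative of r * vr
  have hFeq : (fun ρ : ℝ => (ρ : ℂ) * vr ρ)
      =ᶠ[nhds r] fun ρ : ℝ => Complex.I / 2 * ((ρ : ℂ) ^ (-k) * A ρ + (ρ : ℂ) ^ k * B ρ) := by
    filter_upwards [Ioi_mem_nhds hr] with ρ hρ
    have e1 := hzz ρ hρ (-k)
    have e2 := hzz ρ hρ k
    rw [hvr ρ]
    linear_combination (Complex.I / 2 * A ρ) * e1 + (Complex.I / 2 * B ρ) * e2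
  have hFd : HasDerivAt
      (fun ρ : ℝ => Complex.I / 2 * ((ρ : ℂ) ^ (-k) * A ρ + (ρ : ℂ) ^ k * B ρ))
      (Complex.I / 2 * ((-(k : ℂ) * (r : ℂ) ^ (-k - 1)) * A r + (r : ℂ) ^ (-k) * f r
        + (((k : ℂ) * (r : ℂ) ^ (k - 1)) * B r + (r : ℂ) ^ k * (-(g r))))) r :=
    ((hpn.mul hAd).add (hpk.mul hBd)).const_mul _
  have hd1 : deriv (fun ρ : ℝ => (ρ : ℂ) * vr ρ) r
      = Complex.I / 2 * ((-(k : ℂ) * (r : ℂ) ^ (-k - 1)) * A r + (r : ℂ) ^ (-k) * f r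
        + (((k : ℂ) * (r : ℂ) ^ (k - 1)) * B r + (r : ℂ) ^ k * (-(g r)))) :=
    (hFd.congr_of_eventuallyEq hFeq).deriv
  -- derivative of r * vφ
  have hGeq : (fun ρ : ℝ => (ρ : ℂ) * vφ ρ)
      =ᶠ[nhds r] fun ρ : ℝ => (1 / 2 : ℂ) * ((ρ : ℂ) ^ (-k) * A ρ - (ρ : ℂ) ^ k * B ρ) := by
    filter_upwards [Ioi_mem_nhds hr] with ρ hρ
    have e1 := hzz ρ hρ (-k)
    have e2 := hzz ρ hρ k
    rw [hvφ ρ]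
    linear_combination (A ρ / 2) * e1 - (B ρ / 2) * e2
  have hGd : HasDerivAt
      (fun ρ : ℝ => (1 / 2 : ℂ) * ((ρ : ℂ) ^ (-k) * A ρ - (ρ : ℂ) ^ k * B ρ))
      ((1 / 2 : ℂ) * ((-(k : ℂ) * (r : ℂ) ^ (-k - 1)) * A r + (r : ℂ) ^ (-k) * f r
        - (((k : ℂ) * (r : ℂ) ^ (k - 1)) * B r + (r : ℂ) ^ k * (-(g r))))) r :=
    ((hpn.mul hAd).sub (hpk.mul hBd)).const_mul _
  have hd2 : deriv (fun ρ : ℝ => (ρ : ℂ) * vφ ρ) r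
      = (1 / 2 : ℂ) * ((-(k : ℂ) * (r : ℂ) ^ (-k - 1)) * A r + (r : ℂ) ^ (-k) * f r
        - (((k : ℂ) * (r : ℂ) ^ (k - 1)) * B r + (r : ℂ) ^ k * (-(g r)))) :=
    (hGd.congr_of_eventuallyEq hGeq).deriv
  -- algebraic identities
  have e3 : (r : ℂ) ^ (-k) * (r : ℂ) ^ (k + 1) = (r : ℂ) := by
    rw [← zpow_add₀ hrne, show -k + (k + 1) = 1 by omega, zpow_one]
  have e4 : (r : ℂ) ^ k * (r : ℂ) ^ (-k + 1) = (r : ℂ) := by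
    rw [← zpow_add₀ hrne, show k + (-k + 1) = 1 by omega, zpow_one]
  have hinv : (r : ℂ) * (r : ℂ)⁻¹ = 1 := mul_inv_cancel₀ hrne
  have hI : Complex.I * Complex.I = -1 := Complex.I_mul_I
  constructor
  · rw [hd1, hvφ r]
    simp only [hfdef, hgdef]
    linear_combination (Complex.I * (r : ℂ)⁻¹ * w r / 2) * e3
      - (Complex.I * (r : ℂ)⁻¹ * w r / 2) * e4
  · rw [hd2, hvr r]
    simp only [hfdef, hgdef]
    linear_combination (-(k : ℂ) * (r : ℂ)⁻¹ *
        ((r : ℂ) ^ (-k - 1) * A r + (r : ℂ) ^ (k - 1) * B r) / 2) * hI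
      + ((r : ℂ)⁻¹ * w r / 2) * e3 + ((r : ℂ)⁻¹ * w r / 2) * e4 + (w r) * hinv
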